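/- Suppose N, N+d, N+2d are consecutive elements of the sequence of powerful numbers (d ≥ 1), i.e., all three are powerful and no powerful number lies strictly between N and N+d or strictly between N+d and N+2d. If exactly two of N, N+d, N+2d are perfect squares, then there exists an integer x ≥ 3 with N = (x-2)^2, N+d = (x-1)^2, and N+2d = x^2 - 2. -/
import Mathlib


def Powerful (n : ℕ) : Prop :=
  0 < n ∧ ∀ p : ℕ, p.Prime → p ∣ n → p ^ 2 ∣ n

lemma powerful_sq (k : ℕ) (hk : 0 < k) : Powerful (k ^ 2) := by
  refine ⟨by positivity, fun p hp hdvd => ?_⟩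
  exact pow_dvd_pow_of_dvd (hp.dvd_of_dvd_pow hdvd) 2

theorem stmt_18 (N d : ℕ) (hd : 1 ≤ d)
    (hN : Powerful N) (hNd : Powerful (N + d)) (hN2d : Powerful (N + 2 * d))
    (hgap1 : ∀ a : ℕ, Powerful a → ¬(N < a ∧ a < N + d))
    (hgap2 : ∀ a : ℕ, Powerful a → ¬(N + d < a ∧ a < N + 2 * d))
    (hsq : (IsSquare N ∧ IsSquare (N + d) ∧ ¬IsSquare (N + 2 * d)) ∨
           (IsSquare N ∧ ¬IsSquare (N + d) ∧ IsSquare (N + 2 * d)) ∨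
           (¬IsSquare N ∧ IsSquare (N + d) ∧ IsSquare (N + 2 * d))) :
    ∃ x : ℕ, 3 ≤ x ∧ N = (x - 2) ^ 2 ∧ N + d = (x - 1) ^ 2 ∧ N + 2 * d = x ^ 2 - 2 := by
  have hNpos : 0 < N := hN.1
  rcases hsq with ⟨⟨a, ha⟩, ⟨b, hb⟩, _⟩ | ⟨⟨a, ha⟩, hnsq, ⟨b, hb⟩⟩ | ⟨_, ⟨a, ha⟩, ⟨b, hb⟩⟩
  · -- N = a², N + d = b²
    rw [← sq] at ha hb
    have hapos : 0 < a := Nat.pos_of_ne_zero (by rintro rfl; simp at ha; omega)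
    have hab : a < b := by nlinarith
    have hb' : b = a + 1 := by
      by_contra h
      have h2 : a + 2 ≤ b := by omega
      have := hgap1 ((a+1)^2) (powerful_sq _ (by omega))
      have h1 : N < (a+1)^2 := by nlinarith
      have h3 : (a+1)^2 < N + d := by nlinarith
      exact this ⟨h1, h3⟩
    subst hb'
    have hda : d = 2 * a + 1 := by nlinarith
    refine ⟨a + 2, by omega, ?_, ?_, ?_⟩
    · simpa using ha
    · simpa using hb
    · have : (a + 2) ^ 2 = a ^ 2 + 4 * a + 4 := by ring
      omega
  · -- N = a², N + 2d = b², N + d not square : contradiction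
    exfalso
    rw [← sq] at ha hb
    have hapos : 0 < a := Nat.pos_of_ne_zero (by rintro rfl; simp at ha; omega)
    have hab : a < b := by nlinarith
    rcases eq_or_lt_of_le (show a + 1 ≤ b by omega) with h | h
    · -- b = a+1 : 2d = 2a+1, parity contradiction
      subst h
      have : (a + 1) ^ 2 = a ^ 2 + 2 * a + 1 := by ring
      omega
    · have hpow := powerful_sq (a+1) (by omega)
      have h1 : N < (a+1)^2 := by nlinarith
      have h3 : (a+1)^2 < N + 2 * d := by nlinarith
      have hne1 := hgap1 ((a+1)^2) hpow
      have hne2 := hgap2 ((a+1)^2) hpow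
      have : (a+1)^2 = N + d := by omega
      exact hnsq ⟨a+1, by rw [← this, sq]⟩
  · -- N + d = a², N + 2d = b², N not square : contradiction
    exfalso
    rw [← sq] at ha hb
    have hapos : 0 < a := Nat.pos_of_ne_zero (by rintro rfl; simp at ha; omega)
    have hab : a < b := by nlinarith
    have hb' : b = a + 1 := by
      by_contra h
      have h2 : a + 2 ≤ b := by omega
      have := hgap2 ((a+1)^2) (powerful_sq _ (by omega))
      have h1 : N + d < (a+1)^2 := by nlinarith
      have h3 : (a+1)^2 < N + 2 * d := by nlinarith
      exact this ⟨h1, h3⟩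
    subst hb'
    have hd' : d = 2 * a + 1 := by nlinarith
    obtain ⟨c, rfl⟩ : ∃ c, a = c + 1 := ⟨a - 1, by omega⟩
    have hcpos : 0 < c := by
      rcases Nat.eq_zero_or_pos c with rfl | h
      · simp at ha; omega
      · exact h
    have hpow := powerful_sq c hcpos
    have he : (c + 1) ^ 2 = c ^ 2 + 2 * c + 1 := by ring
    exact hgap1 (c ^ 2) hpow ⟨by omega, by omega⟩
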